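/- Under the standing assumptions, the equilibrium consumer surplus CS is a strictly concave function of the targeting precision: its second derivative with respect to β is strictly negative for every β with 0 ≤ β ≤ 1. -/

import Mathlib

theorem stmt12_F0neg (t v α δ : ℝ) (ht : 0 < t) (hδ : 0 < δ) (hδα : δ < α) (hα : α < 1) (hw : 0 < 2 * t - v) :
    -(4 * (α ^ 2 * δ ^ 2 * (α + δ)) * (2 * t - v) ^ 2) -
      8 * α * δ * (2 * (α + δ) - 3 * α * δ) * (2 * (α + δ) - α * δ) * t * (2 * t - v) - 4 * t ^ 2 *
      (12*δ^3 + 36*α*δ^2 - 44*α*δ^3 + 36*α^2*δ - 88*α^2*δ^2 + 51*α^2*δ^3 + 12*α^3 - 44*α^3*δ + 51*α^3*δ^2 - 18*α^3*δ^3) < 0 := by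
  have ha0 : 0 < α := hδ.trans hδα
  have hB0 : 0 < 2 * (α + δ) - 3 * α * δ := by nlinarith [mul_pos hδ (sub_pos.2 hα)]
  have hB0' : 0 < 2 * (α + δ) - α * δ := by nlinarith [mul_pos hδ (sub_pos.2 hα)]
  have hE0 : 0 < 12*δ^3 + 36*α*δ^2 - 44*α*δ^3 + 36*α^2*δ - 88*α^2*δ^2 + 51*α^2*δ^3 + 12*α^3 - 44*α^3*δ + 51*α^3*δ^2 - 18*α^3*δ^3 := by
    nlinarith [mul_pos hδ (sub_pos.2 hδα), sub_pos.2 hα, mul_pos (mul_pos hδ hδ) hδ, sq_nonneg (α - δ), sq_nonneg (α + δ - 2 * α * δ), mul_pos (mul_pos hδ hδ) (sub_pos.2 hα), mul_pos (mul_pos (hδ.trans hδα) (hδ.trans hδα)) (sub_pos.2 hα), sq_nonneg (α * δ), mul_pos hδ (hδ.trans hδα)]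
  nlinarith [mul_pos (mul_pos (mul_pos (mul_pos ha0 ha0) (mul_pos hδ hδ)) (add_pos ha0 hδ)) (mul_pos hw hw),
      mul_pos (mul_pos (mul_pos (mul_pos (mul_pos ha0 hδ) hB0) hB0') ht) hw,
      mul_pos (mul_pos ht ht) hE0]

theorem stmt12_F1neg (t v α δ : ℝ) (ht : 0 < t) (hδ : 0 < δ) (hδα : δ < α) (hα : α < 1) (hw : 0 < 2 * t - v) :
    -(8 * α ^ 2 * δ ^ 3 * (2 * t - v) ^ 2) -
      8 * α * δ ^ 2 * (8 * δ + 8 * α - 13 * α * δ - 3 * α ^ 2 + 3 * α ^ 2 * δ) * t * (2 * t - v) - 4 * t ^ 2 *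
      (24*δ^3 + 48*α*δ^2 - 76*α*δ^3 + 24*α^2*δ - 88*α^2*δ^2 + 72*α^2*δ^3 - 12*α^3*δ + 30*α^3*δ^2 - 18*α^3*δ^3) < 0 := by
  have ha0 : 0 < α := hδ.trans hδα
  have hC1 : 0 < 8 * δ + 8 * α - 13 * α * δ - 3 * α ^ 2 + 3 * α ^ 2 * δ := by
    nlinarith [mul_pos hδ (sub_pos.2 hδα), mul_pos ha0 hδ, mul_pos ha0 (sub_pos.2 hα), mul_pos hδ (sub_pos.2 hα), mul_pos (mul_pos ha0 ha0) (sub_pos.2 hα), mul_pos (mul_pos ha0 hδ) (sub_pos.2 hα)]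
  have hE1 : 0 < 24*δ^3 + 48*α*δ^2 - 76*α*δ^3 + 24*α^2*δ - 88*α^2*δ^2 + 72*α^2*δ^3 - 12*α^3*δ + 30*α^3*δ^2 - 18*α^3*δ^3 := by
    nlinarith [mul_pos hδ (sub_pos.2 hδα), sub_pos.2 hα, mul_pos (mul_pos hδ hδ) hδ, sq_nonneg (α - δ), sq_nonneg (α + δ - 2 * α * δ), mul_pos (mul_pos hδ hδ) (sub_pos.2 hα), mul_pos (mul_pos (hδ.trans hδα) (hδ.trans hδα)) (sub_pos.2 hα), sq_nonneg (α * δ), mul_pos hδ (hδ.trans hδα)]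
  nlinarith [mul_pos (mul_pos (mul_pos ha0 ha0) (mul_pos (mul_pos hδ hδ) hδ)) (mul_pos hw hw),
      mul_pos (mul_pos (mul_pos (mul_pos ha0 (mul_pos hδ hδ)) hC1) ht) hw,
      mul_pos (mul_pos ht ht) hE1]

set_option maxHeartbeats 2000000 in
theorem stmt12_aux (t v α δ : ℝ) (ht : 0 < t) (hδ : 0 < δ) (hδα : δ < α) (hα : α < 1)
    (hv2 : v < 2 * t) (β : ℝ) (hβ0 : 0 ≤ β) (hβ1 : β ≤ 1) :
    deriv (deriv (fun b : ℝ =>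
      (b * ((1 - α) * δ * (2 * ((α * δ * t + v * ((1 - α) * δ + α * (1 - δ)) + b * (α - δ) * (t - v)) /
        (2 * (α + δ) - 3 * α * δ - 2 * b * (α - δ))) + t - 2 * v) ^ 2 + α * t * (4 * v - 4 * ((α * δ * t + v * ((1 - α) * δ + α * (1 - δ)) + b * (α - δ) * (t - v)) /
        (2 * (α + δ) - 3 * α * δ - 2 * b * (α - δ))) - t)) +
        (1 - b) * (2 * δ * (((α * δ * t + v * ((1 - α) * δ + α * (1 - δ)) + b * (α - δ) * (t - v)) /
        (2 * (α + δ) - 3 * α * δ - 2 * b * (α - δ))) - v) ^ 2 + 2 * α * (((α * δ * t + v * ((1 - α) * δ + α * (1 - δ)) + b * (α - δ) * (t - v)) /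
        (2 * (α + δ) - 3 * α * δ - 2 * b * (α - δ))) - v) ^ 2 -
          α * δ * (2 * ((α * δ * t + v * ((1 - α) * δ + α * (1 - δ)) + b * (α - δ) * (t - v)) /
        (2 * (α + δ) - 3 * α * δ - 2 * b * (α - δ))) + t - 2 * v) ^ 2)) / (4 * t))) β < 0 := by
  have ha0 : 0 < α := hδ.trans hδα
  have had : 0 < α - δ := sub_pos.2 hδα
  have ht' : t ≠ 0 := ne_of_gt ht
  have hw : 0 < 2 * t - v := by linarith
  set CSf : ℝ → ℝ := fun b : ℝ =>
      (b * ((1 - α) * δ * (2 * ((α * δ * t + v * ((1 - α) * δ + α * (1 - δ)) + b * (α - δ) * (t - v)) /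
        (2 * (α + δ) - 3 * α * δ - 2 * b * (α - δ))) + t - 2 * v) ^ 2 + α * t * (4 * v - 4 * ((α * δ * t + v * ((1 - α) * δ + α * (1 - δ)) + b * (α - δ) * (t - v)) /
        (2 * (α + δ) - 3 * α * δ - 2 * b * (α - δ))) - t)) +
        (1 - b) * (2 * δ * (((α * δ * t + v * ((1 - α) * δ + α * (1 - δ)) + b * (α - δ) * (t - v)) /
        (2 * (α + δ) - 3 * α * δ - 2 * b * (α - δ))) - v) ^ 2 + 2 * α * (((α * δ * t + v * ((1 - α) * δ + α * (1 - δ)) + b * (α - δ) * (t - v)) /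
        (2 * (α + δ) - 3 * α * δ - 2 * b * (α - δ))) - v) ^ 2 -
          α * δ * (2 * ((α * δ * t + v * ((1 - α) * δ + α * (1 - δ)) + b * (α - δ) * (t - v)) /
        (2 * (α + δ) - 3 * α * δ - 2 * b * (α - δ))) + t - 2 * v) ^ 2)) / (4 * t) with hCSf
  set Df : ℝ → ℝ := fun b => 2 * (α + δ) - 3 * α * δ - 2 * b * (α - δ) with hDf
  set q0 : ℝ := 2*v^2*δ^3 + 6*v^2*α*δ^2 + 6*v^2*α^2*δ + 2*v^2*α^3 - 8*v^2*α*δ^3 - 16*v^2*α^2*δ^2 - 8*v^2*α^3*δ + 4*t*v*α*δ^3 + 8*t*v*α^2*δ^2 + 4*t*v*α^3*δ - 4*t^2*α*δ^3 - 8*t^2*α^2*δ^2 - 4*t^2*α^3*δ + 10*v^2*α^2*δ^3 + 10*v^2*α^3*δ^2 - 8*t*v*α^2*δ^3 - 8*t*v*α^3*δ^2 + 6*t^2*α^2*δ^3 + 6*t^2*α^3*δ^2 - 4*v^2*α^3*δ^3 + 4*t*v*α^3*δ^3 - t^2*α^3*δ^3 with hq0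
  set q1 : ℝ := 6*v^2*δ^3 + 6*v^2*α*δ^2 - 6*v^2*α^2*δ - 6*v^2*α^3 - 4*t*v*δ^3 - 4*t*v*α*δ^2 + 4*t*v*α^2*δ + 4*t*v*α^3 + 4*t^2*δ^3 + 4*t^2*α*δ^2 - 4*t^2*α^2*δ - 4*t^2*α^3 - 16*v^2*α*δ^3 + 16*v^2*α^3*δ + 16*t*v*α*δ^3 - 16*t*v*α^3*δ - 8*t^2*α*δ^3 + 8*t^2*α^3*δ + 10*v^2*α^2*δ^3 - 10*v^2*α^3*δ^2 - 12*t*v*α^2*δ^3 + 12*t*v*α^3*δ^2 - t^2*α^2*δ^3 + t^2*α^3*δ^2 with hq1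
  set q2 : ℝ := 6*v^2*δ^3 - 6*v^2*α*δ^2 - 6*v^2*α^2*δ + 6*v^2*α^3 - 8*t*v*δ^3 + 8*t*v*α*δ^2 + 8*t*v*α^2*δ - 8*t*v*α^3 + 2*t^2*δ^3 - 2*t^2*α*δ^2 - 2*t^2*α^2*δ + 2*t^2*α^3 - 8*v^2*α*δ^3 + 16*v^2*α^2*δ^2 - 8*v^2*α^3*δ + 12*t*v*α*δ^3 - 24*t*v*α^2*δ^2 + 12*t*v*α^3*δ + 4*t^2*α*δ^3 - 8*t^2*α^2*δ^2 + 4*t^2*α^3*δ with hq2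
  set q3 : ℝ := 2*v^2*δ^3 - 6*v^2*α*δ^2 + 6*v^2*α^2*δ - 2*v^2*α^3 - 4*t*v*δ^3 + 12*t*v*α*δ^2 - 12*t*v*α^2*δ + 4*t*v*α^3 - 2*t^2*δ^3 + 6*t^2*α*δ^2 - 6*t^2*α^2*δ + 2*t^2*α^3 with hq3
  set Qf : ℝ → ℝ := fun b => q0 + q1 * b + q2 * b ^ 2 + q3 * b ^ 3 with hQf
  set G : ℝ → ℝ := fun b => Qf b / (4 * t * (Df b) ^ 2) with hG
  set g1 : ℝ → ℝ := fun b => ((q1 + 2 * q2 * b + 3 * q3 * b ^ 2) * Df b + 4 * (α - δ) * Qf b) / (4 * t * (Df b) ^ 3) with hg1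
  -- generic polynomial derivatives
  have hpoly : ∀ (c0 c1 c2 c3 x : ℝ), HasDerivAt (fun y : ℝ => c0 + c1 * y + c2 * y ^ 2 + c3 * y ^ 3) (c1 + 2 * c2 * x + 3 * c3 * x ^ 2) x := by
    intro c0 c1 c2 c3 x
    have h := (((hasDerivAt_const x c0).add ((hasDerivAt_id x).const_mul c1)).add
      ((hasDerivAt_pow 2 x).const_mul c2)).add ((hasDerivAt_pow 3 x).const_mul c3)
    refine h.congr_deriv ?_
    norm_num; ring
  have hquad : ∀ (c0 c1 c2 x : ℝ), HasDerivAt (fun y : ℝ => c0 + c1 * y + c2 * y ^ 2) (c1 + 2 * c2 * x) x := by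
    intro c0 c1 c2 x
    have h := ((hasDerivAt_const x c0).add ((hasDerivAt_id x).const_mul c1)).add
      ((hasDerivAt_pow 2 x).const_mul c2)
    refine h.congr_deriv ?_
    norm_num; ring
  have hDd : ∀ x : ℝ, HasDerivAt Df (-2 * (α - δ)) x := by
    intro x
    have h := (hasDerivAt_const x (2 * (α + δ) - 3 * α * δ)).sub
      (((hasDerivAt_id x).const_mul 2).mul_const (α - δ))
    have he : (-2 * (α - δ)) = 0 - 2 * 1 * (α - δ) := by ring
    rw [hDf, he]
    exact h
  have hQd : ∀ x : ℝ, HasDerivAt Qf (q1 + 2 * q2 * x + 3 * q3 * x ^ 2) x := by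
    intro x; rw [hQf]; exact hpoly q0 q1 q2 q3 x
  -- D positive on [0,1]
  have hDβ : 0 < Df β := by
    simp only [hDf]
    have h1 : 0 ≤ (1 - β) * (α - δ) := mul_nonneg (by linarith) had.le
    nlinarith [mul_pos hδ (sub_pos.2 hα)]
  have hSopen : IsOpen {x : ℝ | Df x ≠ 0} := by
    have hc : Continuous Df := by simp only [hDf]; fun_prop
    exact IsOpen.preimage hc isOpen_compl_singleton
  -- CS equals G off the singular set
  have hCG : ∀ y : ℝ, Df y ≠ 0 → CSf y = G y := by
    intro y hy
    have hy' : 2 * (α + δ) - 3 * α * δ - 2 * y * (α - δ) ≠ 0 := by simpa [hDf] using hy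
    simp only [hCSf, hG, hQf, hDf, hq0, hq1, hq2, hq3]
    generalize hD : 2 * (α + δ) - 3 * α * δ - 2 * y * (α - δ) = D at hy' ⊢
    field_simp
    subst hD
    ring
  -- first derivative of G
  have hG1 : ∀ x : ℝ, Df x ≠ 0 → HasDerivAt G (g1 x) x := by
    intro x hx
    have hden : HasDerivAt (fun b => 4 * t * (Df b) ^ 2) (4 * t * (2 * Df x ^ 1 * (-2 * (α - δ)))) x :=
      ((hDd x).pow 2).const_mul (4 * t)
    have hne : 4 * t * (Df x) ^ 2 ≠ 0 := by positivity
    have h := (hQd x).div hden hne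
    have hval : g1 x = ((q1 + 2 * q2 * x + 3 * q3 * x ^ 2) * (4 * t * Df x ^ 2) -
        Qf x * (4 * t * (2 * Df x ^ 1 * (-2 * (α - δ))))) / (4 * t * Df x ^ 2) ^ 2 := by
      simp only [hg1]
      simp only [hDf] at hx
      field_simp
      ring
    rw [hG, hval]
    exact h
  have hmem : ∀ x ∈ {x : ℝ | Df x ≠ 0}, deriv CSf x = g1 x := by
    intro x hx
    have hev : CSf =ᶠ[nhds x] G :=
      Filter.eventuallyEq_of_mem (hSopen.mem_nhds hx) (fun y hy => hCG y hy)
    rw [hev.deriv_eq, (hG1 x hx).deriv]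
  have hβD : Df β ≠ 0 := ne_of_gt hDβ
  have hev2 : deriv CSf =ᶠ[nhds β] g1 :=
    Filter.eventuallyEq_of_mem (hSopen.mem_nhds hβD) hmem
  rw [hev2.deriv_eq]
  -- second derivative
  have hnum : HasDerivAt (fun b => (q1 + 2 * q2 * b + 3 * q3 * b ^ 2) * Df b + 4 * (α - δ) * Qf b)
      ((2 * q2 + 2 * (3 * q3) * β) * Df β + (q1 + 2 * q2 * β + 3 * q3 * β ^ 2) * (-2 * (α - δ)) +
        4 * (α - δ) * (q1 + 2 * q2 * β + 3 * q3 * β ^ 2)) β :=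
    ((hquad q1 (2 * q2) (3 * q3) β).mul (hDd β)).add ((hQd β).const_mul (4 * (α - δ)))
  have hden3 : HasDerivAt (fun b => 4 * t * (Df b) ^ 3) (4 * t * (3 * Df β ^ 2 * (-2 * (α - δ)))) β :=
    ((hDd β).pow 3).const_mul (4 * t)
  have hne3 : 4 * t * (Df β) ^ 3 ≠ 0 := by positivity
  have hdiv := hnum.div hden3 hne3
  have hg1d : HasDerivAt g1 ((((2 * q2 + 2 * (3 * q3) * β) * Df β + (q1 + 2 * q2 * β + 3 * q3 * β ^ 2) * (-2 * (α - δ)) +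
        4 * (α - δ) * (q1 + 2 * q2 * β + 3 * q3 * β ^ 2)) * (4 * t * Df β ^ 3) -
        ((q1 + 2 * q2 * β + 3 * q3 * β ^ 2) * Df β + 4 * (α - δ) * Qf β) * (4 * t * (3 * Df β ^ 2 * (-2 * (α - δ))))) /
        (4 * t * Df β ^ 3) ^ 2) β := by
    rw [hg1]
    exact hdiv
  rw [hg1d.deriv]
  -- sign analysis
  set E0v : ℝ := 12*δ^3 + 36*α*δ^2 - 44*α*δ^3 + 36*α^2*δ - 88*α^2*δ^2 + 51*α^2*δ^3 + 12*α^3 - 44*α^3*δ + 51*α^3*δ^2 - 18*α^3*δ^3 with hE0v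
  set E1v : ℝ := 24*δ^3 + 48*α*δ^2 - 76*α*δ^3 + 24*α^2*δ - 88*α^2*δ^2 + 72*α^2*δ^3 - 12*α^3*δ + 30*α^3*δ^2 - 18*α^3*δ^3 with hE1v
  set F0 : ℝ := -(4 * (α ^ 2 * δ ^ 2 * (α + δ)) * (2 * t - v) ^ 2) -
      8 * α * δ * (2 * (α + δ) - 3 * α * δ) * (2 * (α + δ) - α * δ) * t * (2 * t - v) - 4 * t ^ 2 * E0v with hF0v
  set F1 : ℝ := -(8 * α ^ 2 * δ ^ 3 * (2 * t - v) ^ 2) -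
      8 * α * δ ^ 2 * (8 * δ + 8 * α - 13 * α * δ - 3 * α ^ 2 + 3 * α ^ 2 * δ) * t * (2 * t - v) - 4 * t ^ 2 * E1v with hF1v
  have hF0 : F0 < 0 := by
    rw [hF0v, hE0v]; exact stmt12_F0neg t v α δ ht hδ hδα hα hw
  have hF1 : F1 < 0 := by
    rw [hF1v, hE1v]; exact stmt12_F1neg t v α δ ht hδ hδα hα hw
  have hmix : (1 - β) * F0 + β * F1 < 0 := by
    rcases lt_or_ge 0 β with h | h
    · have h1 : β * F1 < 0 := mul_neg_of_pos_of_neg h hF1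
      have h2 : (1 - β) * F0 ≤ 0 := mul_nonpos_of_nonneg_of_nonpos (by linarith) hF0.le
      linarith
    · have hβ : β = 0 := le_antisymm h hβ0
      have he : (1 - β) * F0 + β * F1 = F0 := by rw [hβ]; ring
      rw [he]; exact hF0
  have hRval : (α - δ) ^ 2 * ((1 - β) * F0 + β * F1) < 0 :=
    mul_neg_of_pos_of_neg (pow_pos had 2) hmix
  apply div_neg_of_neg_of_pos
  · have hkey : ((2 * q2 + 2 * (3 * q3) * β) * Df β + (q1 + 2 * q2 * β + 3 * q3 * β ^ 2) * (-2 * (α - δ)) +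
        4 * (α - δ) * (q1 + 2 * q2 * β + 3 * q3 * β ^ 2)) * (4 * t * Df β ^ 3) -
        ((q1 + 2 * q2 * β + 3 * q3 * β ^ 2) * Df β + 4 * (α - δ) * Qf β) * (4 * t * (3 * Df β ^ 2 * (-2 * (α - δ)))) =
        4 * t * Df β ^ 2 * ((α - δ) ^ 2 * ((1 - β) * F0 + β * F1)) := by
      simp only [hF0v, hF1v, hE0v, hE1v, hQf, hDf, hq0, hq1, hq2, hq3]
      ring
    rw [hkey]
    have hpos : 0 < 4 * t * Df β ^ 2 := by positivity
    exact mul_neg_of_pos_of_neg hpos hRval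
  · positivity

set_option maxHeartbeats 1000000 in
theorem stmt_12 (t v α δ : ℝ) (ht : 0 < t) (hδ : 0 < δ) (hδα : δ < α) (hα : α < 1)
    (hv1 : t * (α / ((2 - α) * δ) + 1 / 2) < v) (hv2 : v < 2 * t)
    (β : ℝ) (hβ0 : 0 ≤ β) (hβ1 : β ≤ 1) :
    let CS : ℝ → ℝ := fun b =>
      let P := (α * δ * t + v * ((1 - α) * δ + α * (1 - δ)) + b * (α - δ) * (t - v)) /
        (2 * (α + δ) - 3 * α * δ - 2 * b * (α - δ))
      (b * ((1 - α) * δ * (2 * P + t - 2 * v) ^ 2 + α * t * (4 * v - 4 * P - t)) +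
        (1 - b) * (2 * δ * (P - v) ^ 2 + 2 * α * (P - v) ^ 2 -
          α * δ * (2 * P + t - 2 * v) ^ 2)) / (4 * t)
    deriv (deriv CS) β < 0 := by
  intro CS
  exact stmt12_aux t v α δ ht hδ hδα hα hv2 β hβ0 hβ1
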